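/- Under the conditions A ≥ L²γ/(16ε²) and B ≥ L/(2ε), summing the per-step energy dissipation law of the SL-CN scheme gives, for every N ≥ 1: E_CN^{N+1} + ∑_{n=1}^{N} [ (2√(A/γ) − L/(2ε))‖δ_tφ^{n+1}‖² + (B/2 − L/(4ε))‖δ_{tt}φ^{n+1}‖² ] ≤ E_CN^1. In particular E_CN^{N+1} ≤ E_CN^1 for all N ≥ 1. -/

import Mathlib

set_option maxHeartbeats 1600000
open scoped RealInnerProductSpace
open Finset

lemma taylor_one_side' (F f : ℝ → ℝ) (hd : ∀ x, HasDerivAt F (f x) x)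
    (L : ℝ) (hlip : ∀ a b : ℝ, |f a - f b| ≤ L * |a - b|) (x y : ℝ) :
    F x - F y - f y * (x - y) ≤ L / 2 * (x - y) ^ 2 := by
  set g : ℝ → ℝ := fun t => F y + f y * (t - y) + L / 2 * (t - y) ^ 2 - F t with hg
  have hg' : ∀ t, HasDerivAt g (f y + L * (t - y) - f t) t := by
    intro t
    have h1 : HasDerivAt (fun t : ℝ => F y + f y * (t - y) + L / 2 * (t - y) ^ 2 - F t)
        (0 + f y * 1 + L / 2 * (↑2 * (t - y) ^ 1 * 1) - f t) t :=
      (((hasDerivAt_const t (F y)).add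
        (((hasDerivAt_id t).sub_const y).const_mul (f y))).add
        ((((hasDerivAt_id t).sub_const y).pow 2).const_mul (L / 2))).sub (hd t)
    convert h1 using 1
    ring
  have hgy : g y = 0 := by simp [hg]
  have key : 0 ≤ g x := by
    rcases lt_trichotomy x y with h | h | h
    · obtain ⟨c, hc, hceq⟩ := exists_hasDerivAt_eq_slope g
        (fun t => f y + L * (t - y) - f t) h
        (fun t _ => (hg' t).continuousAt.continuousWithinAt)
        (fun t _ => (hg' t))
      have h1 : f y - f c ≤ L * (y - c) := by
        have h2 := hlip y c
        have habs : |y - c| = y - c := abs_of_pos (by linarith [hc.2])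
        calc f y - f c ≤ |f y - f c| := le_abs_self _
          _ ≤ L * |y - c| := h2
          _ = L * (y - c) := by rw [habs]
      have h2 : f y + L * (c - y) - f c ≤ 0 := by linarith
      rw [hgy] at hceq
      have hxy : 0 < y - x := by linarith
      have h3 : 0 - g x = (f y + L * (c - y) - f c) * (y - x) :=
        (div_eq_iff hxy.ne').mp hceq.symm
      nlinarith [mul_nonpos_iff.mpr (Or.inr ⟨h2, hxy.le⟩), h3]
    · subst h; rw [hgy]
    · obtain ⟨c, hc, hceq⟩ := exists_hasDerivAt_eq_slope g
        (fun t => f y + L * (t - y) - f t) h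
        (fun t _ => (hg' t).continuousAt.continuousWithinAt)
        (fun t _ => (hg' t))
      have h1 : f c - f y ≤ L * (c - y) := by
        have h2 := hlip c y
        have habs : |c - y| = c - y := abs_of_pos (by linarith [hc.1])
        calc f c - f y ≤ |f c - f y| := le_abs_self _
          _ ≤ L * |c - y| := h2
          _ = L * (c - y) := by rw [habs]
      have h2 : 0 ≤ f y + L * (c - y) - f c := by linarith
      rw [hgy] at hceq
      have hxy : 0 < x - y := by linarith
      have h3 : g x = (f y + L * (c - y) - f c) * (x - y) := by
        have := (div_eq_iff hxy.ne').mp hceq.symm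
        linarith [this]
      rw [h3]
      positivity
  simp only [hg] at key
  linarith

lemma deriv_lip' (F : ℝ → ℝ) (hF : ContDiff ℝ 2 F) (L : ℝ) (hL : 0 ≤ L)
    (hf' : ∀ x : ℝ, |deriv (deriv F) x| ≤ L) :
    ∀ a b : ℝ, |deriv F a - deriv F b| ≤ L * |a - b| := by
  have h2 : ContDiff ℝ (1 + 1) F := by
    norm_num
    exact hF
  have hdF : ContDiff ℝ 1 (deriv F) := (contDiff_succ_iff_deriv.mp h2).2.2
  have hlw : LipschitzWith L.toNNReal (deriv F) := by
    apply lipschitzWith_of_nnnorm_deriv_le (hdF.differentiable (by norm_num))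
    intro x
    rw [← NNReal.coe_le_coe, coe_nnnorm, Real.coe_toNNReal _ hL, Real.norm_eq_abs]
    exact hf' x
  intro a b
  have := hlw.dist_le_mul a b
  rwa [Real.dist_eq, Real.dist_eq, Real.coe_toNNReal _ hL] at this

lemma pointwise_bound' (F : ℝ → ℝ) (hF : ContDiff ℝ 2 F) (L : ℝ) (hL : 0 ≤ L)
    (hf' : ∀ x : ℝ, |deriv (deriv F) x| ≤ L) (ai bi ci : ℝ) :
    F bi - F ai ≤ deriv F (3/2 * ai - 1/2 * ci) * (bi - ai)
      + L/4 * (bi - ai)^2 + L/4 * (bi - 2*ai + ci)^2 + L/8 * (ai - ci)^2 := by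
  have hdF : ∀ x, HasDerivAt F (deriv F x) x := fun x =>
    ((hF.differentiable (by norm_num)) x).hasDerivAt
  have hlip := deriv_lip' F hF L hL hf'
  have t1 := taylor_one_side' F (deriv F) hdF L hlip bi (3/2 * ai - 1/2 * ci)
  have t2 := taylor_one_side' (fun x => -F x) (fun x => -deriv F x)
    (fun x => (hdF x).neg) L
    (fun a b => by
      have h : -deriv F a - -deriv F b = -(deriv F a - deriv F b) := by ring
      rw [h, abs_neg]; exact hlip a b) ai (3/2 * ai - 1/2 * ci)
  nlinarith [mul_nonneg hL (sq_nonneg ((bi - ai) - (bi - 2*ai + ci)))]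

theorem stmt_3 {M : ℕ}
    (K : EuclideanSpace ℝ (Fin M) →ₗ[ℝ] EuclideanSpace ℝ (Fin M))
    (hKsa : ∀ x y : EuclideanSpace ℝ (Fin M), ⟪K x, y⟫ = ⟪x, K y⟫)
    (hKpsd : ∀ x : EuclideanSpace ℝ (Fin M), 0 ≤ ⟪K x, x⟫)
    (F : ℝ → ℝ) (hF : ContDiff ℝ 2 F)
    (L : ℝ) (hL : 0 ≤ L) (hf' : ∀ x : ℝ, |deriv (deriv F) x| ≤ L)
    (τ γ ε : ℝ) (hτ : 0 < τ) (hγ : 0 < γ) (hε : 0 < ε)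
    (A B : ℝ) (hA : 0 ≤ A) (hB : 0 ≤ B)
    (φ μc : ℕ → EuclideanSpace ℝ (Fin M))
    (hscheme1 : ∀ n, 1 ≤ n → (1/τ) • (φ (n+1) - φ n) = -γ • K (μc n))
    (hscheme2 : ∀ n, 1 ≤ n → μc n =
      ε • K ((1/2 : ℝ) • (φ (n+1) + φ n)) +
      (1/ε) • ((WithLp.equiv 2 (Fin M → ℝ)).symm
          (fun i => deriv F ((3/2) * φ n i - (1/2) * φ (n-1) i))) +
      (A * τ) • K (φ (n+1) - φ n) +
      B • (φ (n+1) - (2:ℝ) • φ n + φ (n-1)))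
    (hAcond : A ≥ L^2 * γ / (16 * ε^2)) (hBcond : B ≥ L / (2 * ε)) :
    ∀ N, 1 ≤ N →
      ((ε/2) * ⟪K (φ (N+1)), φ (N+1)⟫ + (1/ε) * ∑ i, F (φ (N+1) i)
          + (L/(4*ε) + B/2) * ‖φ (N+1) - φ N‖^2
        + ∑ n ∈ Finset.Icc 1 N,
            ((2 * Real.sqrt (A/γ) - L/(2*ε)) * ‖φ (n+1) - φ n‖^2
              + (B/2 - L/(4*ε)) * ‖φ (n+1) - (2:ℝ) • φ n + φ (n-1)‖^2)
        ≤ (ε/2) * ⟪K (φ 1), φ 1⟫ + (1/ε) * ∑ i, F (φ 1 i)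
          + (L/(4*ε) + B/2) * ‖φ 1 - φ 0‖^2)
      ∧
      ((ε/2) * ⟪K (φ (N+1)), φ (N+1)⟫ + (1/ε) * ∑ i, F (φ (N+1) i)
          + (L/(4*ε) + B/2) * ‖φ (N+1) - φ N‖^2
        ≤ (ε/2) * ⟪K (φ 1), φ 1⟫ + (1/ε) * ∑ i, F (φ 1 i)
          + (L/(4*ε) + B/2) * ‖φ 1 - φ 0‖^2) := by
  set s := Real.sqrt (A/γ) with hsdef
  have hKab : ∀ u v : EuclideanSpace ℝ (Fin M), ⟪K u, v⟫ = ⟪K v, u⟫ := by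
    intro u v; rw [hKsa]; exact real_inner_comm _ _
  have hAs : s ^ 2 = A / γ := by rw [hsdef]; exact Real.sq_sqrt (div_nonneg hA hγ.le)
  have hA2 : A = s ^ 2 * γ := by rw [hAs]; field_simp
  -- coefficient nonnegativity
  have hsle : L / (4*ε) ≤ s := by
    have h1 : (L/(4*ε))^2 ≤ A/γ := by
      rw [div_pow, div_le_div_iff₀ (by positivity) hγ]
      have h2 := (div_le_iff₀ (by positivity : (0:ℝ) < 16*ε^2)).mp hAcond
      nlinarith [h2]
    have h2 := Real.sqrt_le_sqrt h1
    rw [Real.sqrt_sq (by positivity)] at h2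
    rw [hsdef]; exact h2
  have hhalf : L/(2*ε) = 2*(L/(4*ε)) := by ring
  have c1 : 0 ≤ 2*s - L/(2*ε) := by linarith
  have c2 : 0 ≤ B/2 - L/(4*ε) := by linarith [hBcond]
  -- per step estimate
  have step : ∀ n : ℕ, 1 ≤ n →
      ((ε/2) * ⟪K (φ (n+1)), φ (n+1)⟫ + (1/ε) * ∑ i, F (φ (n+1) i)
          + (L/(4*ε) + B/2) * ‖φ (n+1) - φ n‖^2)
        + ((2 * s - L/(2*ε)) * ‖φ (n+1) - φ n‖^2
            + (B/2 - L/(4*ε)) * ‖φ (n+1) - (2:ℝ) • φ n + φ (n-1)‖^2)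
      ≤ (ε/2) * ⟪K (φ n), φ n⟫ + (1/ε) * ∑ i, F (φ n i)
          + (L/(4*ε) + B/2) * ‖φ n - φ (n-1)‖^2 := by
    intro n hn
    have hδeq : φ (n+1) - φ n = (-(τ*γ)) • K (μc n) := by
      have h := hscheme1 n hn
      have h2 : τ • ((1/τ) • (φ (n+1) - φ n)) = τ • (-γ • K (μc n)) := by rw [h]
      rw [smul_smul, mul_one_div, div_self hτ.ne', one_smul] at h2
      rw [h2]; module
    have f2 : ε * ⟪K ((1/2 : ℝ) • (φ (n+1) + φ n)), φ (n+1) - φ n⟫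
        = (ε/2) * ⟪K (φ (n+1)), φ (n+1)⟫ - (ε/2) * ⟪K (φ n), φ n⟫ := by
      rw [map_smul, real_inner_smul_left, map_add, inner_add_left,
        inner_sub_right, inner_sub_right, hKab (φ (n+1)) (φ n)]
      ring
    have f3 : (∑ i, F (φ (n+1) i)) - (∑ i, F (φ n i))
        ≤ ⟪((WithLp.equiv 2 (Fin M → ℝ)).symm
             (fun i => deriv F ((3/2) * φ n i - (1/2) * φ (n-1) i))), φ (n+1) - φ n⟫
          + (L/4 * ‖φ (n+1) - φ n‖^2
          + L/4 * ‖φ (n+1) - (2:ℝ) • φ n + φ (n-1)‖^2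
          + L/8 * ‖φ n - φ (n-1)‖^2) := by
      have hX : ⟪((WithLp.equiv 2 (Fin M → ℝ)).symm
             (fun i => deriv F ((3/2) * φ n i - (1/2) * φ (n-1) i))), φ (n+1) - φ n⟫
          = ∑ i, deriv F ((3/2) * φ n i - (1/2) * φ (n-1) i) * (φ (n+1) i - φ n i) := by
        simp [PiLp.inner_apply, RCLike.inner_apply,
          PiLp.sub_apply]
        exact Finset.sum_congr rfl fun i _ => mul_comm _ _
      have hd2 : ‖φ (n+1) - φ n‖^2 = ∑ i, (φ (n+1) i - φ n i)^2 := by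
        rw [EuclideanSpace.norm_sq_eq]
        simp [Real.norm_eq_abs, sq_abs, PiLp.sub_apply]
      have hw2 : ‖φ (n+1) - (2:ℝ) • φ n + φ (n-1)‖^2
          = ∑ i, (φ (n+1) i - 2 * φ n i + φ (n-1) i)^2 := by
        rw [EuclideanSpace.norm_sq_eq]
        simp [Real.norm_eq_abs, sq_abs, PiLp.sub_apply, PiLp.add_apply,
          PiLp.smul_apply, smul_eq_mul]
      have he2 : ‖φ n - φ (n-1)‖^2 = ∑ i, (φ n i - φ (n-1) i)^2 := by
        rw [EuclideanSpace.norm_sq_eq]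
        simp [Real.norm_eq_abs, sq_abs, PiLp.sub_apply]
      rw [hX, hd2, hw2, he2, ← Finset.sum_sub_distrib, Finset.mul_sum, Finset.mul_sum,
        Finset.mul_sum, ← Finset.sum_add_distrib, ← Finset.sum_add_distrib,
        ← Finset.sum_add_distrib]
      apply Finset.sum_le_sum
      intro i _
      have hpt := pointwise_bound' F hF L hL hf' (φ n i) (φ (n+1) i) (φ (n-1) i)
      linarith [hpt]
    have f4 : ⟪μc n, φ (n+1) - φ n⟫
        = ε * ⟪K ((1/2 : ℝ) • (φ (n+1) + φ n)), φ (n+1) - φ n⟫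
          + (1/ε) * ⟪((WithLp.equiv 2 (Fin M → ℝ)).symm
              (fun i => deriv F ((3/2) * φ n i - (1/2) * φ (n-1) i))), φ (n+1) - φ n⟫
          + (A * τ) * ⟪K (φ (n+1) - φ n), φ (n+1) - φ n⟫
          + B * ⟪φ (n+1) - (2:ℝ) • φ n + φ (n-1), φ (n+1) - φ n⟫ := by
      rw [hscheme2 n hn]
      simp only [inner_add_left, real_inner_smul_left]
    have f5 : ⟪μc n, φ (n+1) - φ n⟫ = -(τ*γ) * ⟪K (μc n), μc n⟫ := by
      rw [hδeq, real_inner_smul_right, real_inner_comm (μc n) (K (μc n))]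
    have hw : φ (n+1) - (2:ℝ) • φ n + φ (n-1) = (φ (n+1) - φ n) - (φ n - φ (n-1)) := by
      module
    have f6 : B * ⟪φ (n+1) - (2:ℝ) • φ n + φ (n-1), φ (n+1) - φ n⟫
        = B/2 * ‖φ (n+1) - φ n‖^2 - B/2 * ‖φ n - φ (n-1)‖^2
          + B/2 * ‖φ (n+1) - (2:ℝ) • φ n + φ (n-1)‖^2 := by
      rw [hw, inner_sub_left, real_inner_self_eq_norm_sq,
        real_inner_comm (φ (n+1) - φ n) (φ n - φ (n-1)),
        norm_sub_sq_real (φ (n+1) - φ n) (φ n - φ (n-1))]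
      ring
    -- cross term estimate
    have hKK : ⟪K (μc n), K (μc n)⟫ = ‖K (μc n)‖^2 := real_inner_self_eq_norm_sq _
    have hq : ⟪K (μc n), φ (n+1) - φ n⟫ = -(τ*γ) * ‖K (μc n)‖^2 := by
      rw [hδeq, real_inner_smul_right, hKK]
    have hd2' : ‖φ (n+1) - φ n‖^2 = (τ*γ)^2 * ‖K (μc n)‖^2 := by
      rw [hδeq, norm_smul, mul_pow, Real.norm_eq_abs, sq_abs]
      ring
    have hsym2 : ⟪K (φ (n+1) - φ n), μc n⟫ = ⟪K (μc n), φ (n+1) - φ n⟫ := hKab _ _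
    have psd := hKpsd (μc n + s • (φ (n+1) - φ n))
    simp only [map_add, map_smul, inner_add_left, inner_add_right,
      real_inner_smul_left, real_inner_smul_right] at psd
    rw [hsym2, hq] at psd
    have f7 : 2 * s * ‖φ (n+1) - φ n‖^2
        ≤ τ*γ*⟪K (μc n), μc n⟫ + (A*τ) * ⟪K (φ (n+1) - φ n), φ (n+1) - φ n⟫ := by
      rw [hd2', hA2]
      nlinarith [mul_nonneg (mul_pos hτ hγ).le psd]
    have g3 := mul_le_mul_of_nonneg_left f3 (le_of_lt (one_div_pos.mpr hε))
    have he : (0:ℝ) ≤ L/(8*ε) * ‖φ n - φ (n-1)‖^2 :=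
      mul_nonneg (div_nonneg hL (by positivity)) (sq_nonneg _)
    have hee : (1/ε) * (L/4 * ‖φ (n+1) - φ n‖^2
          + L/4 * ‖φ (n+1) - (2:ℝ) • φ n + φ (n-1)‖^2
          + L/8 * ‖φ n - φ (n-1)‖^2)
        = L/(4*ε) * ‖φ (n+1) - φ n‖^2
          + L/(4*ε) * ‖φ (n+1) - (2:ℝ) • φ n + φ (n-1)‖^2
          + L/(8*ε) * ‖φ n - φ (n-1)‖^2 := by
      field_simp
    have hb1 : L/(2*ε) * ‖φ (n+1) - φ n‖^2 = 2*(L/(4*ε) * ‖φ (n+1) - φ n‖^2) := by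
      ring
    set X := ⟪((WithLp.equiv 2 (Fin M → ℝ)).symm
        (fun i => deriv F ((3/2) * φ n i - (1/2) * φ (n-1) i))), φ (n+1) - φ n⟫ with hXdef
    ring_nf at f2 g3 f4 f5 f6 f7 he ⊢
    linarith [f2, g3, f4, f5, f6, f7, he]
  -- telescoping
  have main : ∀ N : ℕ, 1 ≤ N →
      ((ε/2) * ⟪K (φ (N+1)), φ (N+1)⟫ + (1/ε) * ∑ i, F (φ (N+1) i)
          + (L/(4*ε) + B/2) * ‖φ (N+1) - φ N‖^2)
        + ∑ n ∈ Finset.Icc 1 N,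
            ((2 * s - L/(2*ε)) * ‖φ (n+1) - φ n‖^2
              + (B/2 - L/(4*ε)) * ‖φ (n+1) - (2:ℝ) • φ n + φ (n-1)‖^2)
      ≤ (ε/2) * ⟪K (φ 1), φ 1⟫ + (1/ε) * ∑ i, F (φ 1 i)
          + (L/(4*ε) + B/2) * ‖φ 1 - φ 0‖^2 := by
    intro N hN
    induction N with
    | zero => exact absurd hN (by norm_num)
    | succ m ih =>
      rcases Nat.lt_or_ge m 1 with hm | hm
      · interval_cases m
        have h := step 1 le_rfl
        simpa using h
      · have hins : Finset.Icc 1 (m+1) = insert (m+1) (Finset.Icc 1 m) :=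
          (Finset.insert_Icc_right_eq_Icc_add_one (by omega)).symm
        rw [hins, Finset.sum_insert (by simp)]
        have h1 := step (m+1) (by omega)
        simp only [Nat.add_sub_cancel] at h1 ⊢
        have h2 := ih hm
        linarith [h1, h2]
  intro N hN
  have hsumnn : (0:ℝ) ≤ ∑ n ∈ Finset.Icc 1 N,
      ((2 * s - L/(2*ε)) * ‖φ (n+1) - φ n‖^2
        + (B/2 - L/(4*ε)) * ‖φ (n+1) - (2:ℝ) • φ n + φ (n-1)‖^2) :=
    Finset.sum_nonneg fun n _ =>
      add_nonneg (mul_nonneg c1 (sq_nonneg _)) (mul_nonneg c2 (sq_nonneg _))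
  constructor
  · exact main N hN
  · linarith [main N hN, hsumnn]
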